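/- arXiv:1001.1123 — 2 statements merged into one kernel-verified Lean document; each statement's English description precedes it below -/
import Mathlib

section
/- Let ρ > 0 and define r(R) = R^{1-ρ/2}. Let h(z) be the harmonic function in the annulus A = {z : R - r(R) < |z| ≤ R + r(R)} given by h(z) = (R+r(R))^ρ · (log|z| - log(R - r(R)))/(log(R+r(R)) - log(R-r(R))) + (R-r(R))^ρ · (log(R+r(R)) - log|z|)/(log(R+r(R)) - log(R-r(R))). Then there is a constant C, independent of R ≥ R₀, such that for all z in A, | |z|^ρ - h(z) | ≤ C. -/
set_option maxHeartbeats 1000000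

open Metric

private lemma exp_diff_le' {x y : ℝ} (_h : x ≤ y) :
    Real.exp y - Real.exp x ≤ Real.exp y * (y - x) := by
  have h1 := Real.add_one_le_exp (x - y)
  have h2 : Real.exp (x - y) * Real.exp y = Real.exp x := by
    rw [← Real.exp_add]; ring_nf
  nlinarith [Real.exp_pos y, Real.exp_pos x]

private lemma le_exp_diff' {x y : ℝ} (_h : x ≤ y) :
    Real.exp x * (y - x) ≤ Real.exp y - Real.exp x := by
  have h1 := Real.add_one_le_exp (y - x)
  have h2 : Real.exp (y - x) * Real.exp x = Real.exp y := by
    rw [← Real.exp_add]; ring_nf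
  nlinarith [Real.exp_pos x]

private lemma interp_bounds (EX EY EZ p q ρ δ : ℝ)
    (hp : 0 ≤ p) (hq : 0 ≤ q) (hpq : p + q = 1)
    (hρδ : 0 ≤ ρ * δ)
    (hEZX : EX ≤ EZ)
    (i1 : EZ - EY ≤ EZ * (ρ * (q * δ)))
    (i2 : EY * (ρ * (q * δ)) ≤ EZ - EY)
    (i3 : EY - EX ≤ EY * (ρ * (p * δ)))
    (i4 : EX * (ρ * (p * δ)) ≤ EY - EX)
    (i5 : EZ - EX ≤ EZ * (ρ * δ)) :
    EY ≤ EZ * p + EX * q ∧ EZ * p + EX * q - EY ≤ ρ^2 * δ^2 * EZ / 4 := by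
  have j2 : p * (EY * (ρ * (q * δ))) ≤ p * (EZ - EY) := mul_le_mul_of_nonneg_left i2 hp
  have j3 : q * (EY - EX) ≤ q * (EY * (ρ * (p * δ))) := mul_le_mul_of_nonneg_left i3 hq
  have e4 : p * (EY * (ρ * (q * δ))) = q * (EY * (ρ * (p * δ))) := by ring
  have e5 : p * EY + q * EY = EY := by rw [← add_mul, hpq, one_mul]
  constructor
  · linarith [j2, j3, e4, e5]
  · have k1 : p * (EZ - EY) ≤ p * (EZ * (ρ * (q * δ))) := mul_le_mul_of_nonneg_left i1 hp
    have k2 : q * (EX * (ρ * (p * δ))) ≤ q * (EY - EX) := mul_le_mul_of_nonneg_left i4 hq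
    have hpq4 : p * q ≤ 1/4 := by nlinarith [sq_nonneg (p - q)]
    have hEZX' : 0 ≤ EZ - EX := by linarith
    have k3 : ρ * δ * (p * q) * (EZ - EX) ≤ ρ * δ * (1/4) * (EZ * (ρ * δ)) := by
      have h1 : ρ * δ * (p * q) * (EZ - EX) ≤ ρ * δ * (1/4) * (EZ - EX) := by
        apply mul_le_mul_of_nonneg_right _ hEZX'
        exact mul_le_mul_of_nonneg_left hpq4 hρδ
      have h2 : ρ * δ * (1/4) * (EZ - EX) ≤ ρ * δ * (1/4) * (EZ * (ρ * δ)) :=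
        mul_le_mul_of_nonneg_left i5 (by positivity)
      linarith
    have e6 : p * (EZ * (ρ * (q * δ))) - q * (EX * (ρ * (p * δ)))
        = ρ * δ * (p * q) * (EZ - EX) := by ring
    have e7 : ρ * δ * (1/4) * (EZ * (ρ * δ)) = ρ^2 * δ^2 * EZ / 4 := by ring
    linarith [k1, k2, k3, e5, e6, e7]

/-- the minimal harmonic majorant of `|z|^ρ` in the annulus
`A = {z : R - r(R) < |z| ≤ R + r(R)}`, `r(R) = R^{1-ρ/2}`, differs from `|z|^ρ`
by a bounded quantity, uniformly for large `R`. -/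
theorem harmonic_majorant_annulus_bound (ρ : ℝ) (hρ : 0 < ρ) :
    ∃ R₀ C : ℝ, 0 < C ∧ ∀ R : ℝ, R₀ ≤ R → ∀ z : ℂ,
      R - R ^ (1 - ρ / 2) < ‖z‖ → ‖z‖ ≤ R + R ^ (1 - ρ / 2) →
      |‖z‖ ^ ρ -
        ((R + R ^ (1 - ρ / 2)) ^ ρ *
            ((Real.log (‖z‖) - Real.log (R - R ^ (1 - ρ / 2))) /
              (Real.log (R + R ^ (1 - ρ / 2)) - Real.log (R - R ^ (1 - ρ / 2)))) +
         (R - R ^ (1 - ρ / 2)) ^ ρ *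
            ((Real.log (R + R ^ (1 - ρ / 2)) - Real.log (‖z‖)) /
              (Real.log (R + R ^ (1 - ρ / 2)) - Real.log (R - R ^ (1 - ρ / 2)))))| ≤ C := by
  refine ⟨max 2 ((2:ℝ) ^ (2/ρ)), 4*ρ^2*2^ρ + 1, by positivity, ?_⟩
  intro R hR z hz1 hz2
  have hR2 : (2:ℝ) ≤ R := le_trans (le_max_left _ _) hR
  have hRpos : (0:ℝ) < R := by linarith
  set r : ℝ := R ^ (1 - ρ/2) with hrdef
  have hr_pos : 0 < r := Real.rpow_pos_of_pos hRpos _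
  -- r ≤ R/2
  have e1 : ((2:ℝ) ^ (2/ρ)) ^ (ρ/2) = 2 := by
    rw [← Real.rpow_mul (by norm_num), show 2/ρ * (ρ/2) = 1 by field_simp, Real.rpow_one]
  have hhalf : (2:ℝ) ≤ R ^ (ρ/2) := by
    calc (2:ℝ) = ((2:ℝ) ^ (2/ρ)) ^ (ρ/2) := e1.symm
      _ ≤ R ^ (ρ/2) :=
        Real.rpow_le_rpow (by positivity) (le_trans (le_max_right _ _) hR) (by positivity)
  have hrR : r ≤ R / 2 := by
    have hre : r = R / R ^ (ρ/2) := by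
      rw [hrdef, Real.rpow_sub hRpos, Real.rpow_one]
    rw [hre]
    gcongr
  set a : ℝ := R - r with hadef
  set b : ℝ := R + r with hbdef
  have ha_pos : 0 < a := by simp only [hadef]; linarith
  have haR : R / 2 ≤ a := by simp only [hadef]; linarith
  have hb_pos : 0 < b := by simp only [hbdef]; linarith
  set t : ℝ := ‖z‖ with htdef
  have ht_pos : 0 < t := lt_trans ha_pos hz1
  have hla_lt : Real.log a < Real.log t := Real.log_lt_log ha_pos hz1
  have hlt_le : Real.log t ≤ Real.log b := Real.log_le_log ht_pos hz2
  set δ : ℝ := Real.log b - Real.log a with hδdef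
  have hδ : 0 < δ := by simp only [hδdef]; linarith
  set p : ℝ := (Real.log t - Real.log a) / δ with hpdef
  set q : ℝ := (Real.log b - Real.log t) / δ with hqdef
  have hp : 0 ≤ p := div_nonneg (by linarith) hδ.le
  have hq : 0 ≤ q := div_nonneg (by linarith) hδ.le
  have hpq : p + q = 1 := by
    rw [hpdef, hqdef, ← add_div, hδdef]
    rw [div_eq_one_iff_eq (sub_pos.2 (hla_lt.trans_le hlt_le)).ne']; ring
  have hpδ : p * δ = Real.log t - Real.log a := by
    rw [hpdef]; field_simp
  have hqδ : q * δ = Real.log b - Real.log t := by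
    rw [hqdef]; field_simp
  set X : ℝ := Real.log a * ρ with hXdef
  set Y : ℝ := Real.log t * ρ with hYdef
  set Z : ℝ := Real.log b * ρ with hZdef
  have hXY : X ≤ Y := mul_le_mul_of_nonneg_right hla_lt.le hρ.le
  have hYZ : Y ≤ Z := mul_le_mul_of_nonneg_right hlt_le hρ.le
  have hXZ : X ≤ Z := hXY.trans hYZ
  have hXa : a ^ ρ = Real.exp X := Real.rpow_def_of_pos ha_pos ρ
  have hYt : t ^ ρ = Real.exp Y := Real.rpow_def_of_pos ht_pos ρ
  have hZb : b ^ ρ = Real.exp Z := Real.rpow_def_of_pos hb_pos ρ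
  -- relations between differences of X,Y,Z and p,q,δ
  have hZYr : Z - Y = ρ * (q * δ) := by rw [hqδ, hZdef, hYdef]; ring
  have hYXr : Y - X = ρ * (p * δ) := by rw [hpδ, hYdef, hXdef]; ring
  have hZXr : Z - X = ρ * δ := by rw [hZdef, hXdef, hδdef]; ring
  have i1 := exp_diff_le' hYZ
  have i2 := le_exp_diff' hYZ
  have i3 := exp_diff_le' hXY
  have i4 := le_exp_diff' hXY
  have i5 := exp_diff_le' hXZ
  rw [hZYr] at i1 i2
  rw [hYXr] at i3 i4
  rw [hZXr] at i5
  have hEZX : Real.exp X ≤ Real.exp Z := Real.exp_le_exp.2 hXZ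
  obtain ⟨hD0, hDup⟩ := interp_bounds (Real.exp X) (Real.exp Y) (Real.exp Z) p q ρ δ
    hp hq hpq (by positivity) hEZX i1 i2 i3 i4 i5
  -- numerical bound on ρ^2 δ^2 exp Z / 4
  have hδle : δ ≤ 4 * r / R := by
    have hlog : Real.log b - Real.log a = Real.log (b / a) :=
      (Real.log_div hb_pos.ne' ha_pos.ne').symm
    have h6 : Real.log (b / a) ≤ b / a - 1 := Real.log_le_sub_one_of_pos (by positivity)
    have h7 : b / a - 1 = 2 * r / a := by
      rw [div_sub_one ha_pos.ne', hbdef, hadef]; ring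
    have h8 : 2 * r / a ≤ 4 * r / R := by
      rw [div_le_div_iff₀ ha_pos hRpos]
      have h8' : 0 ≤ 2 * r * (2 * a - R) := mul_nonneg (by linarith) (by linarith)
      linarith only [h8']
    calc δ = Real.log (b / a) := by rw [hδdef, hlog]
      _ ≤ b / a - 1 := h6
      _ = 2 * r / a := h7
      _ ≤ 4 * r / R := h8
  have hb2R : b ≤ 2 * R := by rw [hbdef]; linarith
  have h9 : b ^ ρ ≤ (2 * R) ^ ρ := Real.rpow_le_rpow hb_pos.le hb2R hρ.le
  have h10 : (2 * R : ℝ) ^ ρ = 2 ^ ρ * R ^ ρ := Real.mul_rpow (by norm_num) hRpos.le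
  set u : ℝ := R ^ (-(ρ/2)) with hudef
  have hu_pos : 0 < u := Real.rpow_pos_of_pos hRpos _
  have hru : r = R * u := by
    rw [hrdef, hudef, show 1 - ρ/2 = 1 + -(ρ/2) by ring, Real.rpow_add hRpos, Real.rpow_one]
  have h11 : u * u * R ^ ρ = 1 := by
    rw [hudef, ← Real.rpow_add hRpos, ← Real.rpow_add hRpos,
      show -(ρ/2) + -(ρ/2) + ρ = 0 by ring, Real.rpow_zero]
  have hδle' : δ ≤ 4 * u := by
    have heq : 4 * r / R = 4 * u := by rw [hru]; field_simp
    rw [← heq]; exact hδle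
  have h12 : δ^2 * Real.exp Z ≤ 16 * 2 ^ ρ := by
    have hd2 : δ^2 ≤ (4*u)^2 := pow_le_pow_left₀ hδ.le hδle' 2
    have hexpZ : Real.exp Z ≤ 2 ^ ρ * R ^ ρ := by rw [← hZb, ← h10]; exact h9
    calc δ^2 * Real.exp Z ≤ (4*u)^2 * (2 ^ ρ * R ^ ρ) :=
          mul_le_mul hd2 hexpZ (Real.exp_pos Z).le (by positivity)
      _ = 16 * 2 ^ ρ * (u * u * R ^ ρ) := by ring
      _ = 16 * 2 ^ ρ := by rw [h11]; ring
  have hfinal : ρ^2 * δ^2 * Real.exp Z / 4 ≤ 4 * ρ^2 * 2 ^ ρ := by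
    have hm := mul_le_mul_of_nonneg_left h12 (by positivity : (0:ℝ) ≤ ρ^2 / 4)
    linarith only [hm]
  rw [hYt, hXa, hZb, abs_le]
  have hC : (0:ℝ) ≤ 4*ρ^2*2^ρ := by positivity
  constructor
  · linarith only [hDup, hfinal]
  · linarith only [hD0, hC]
end

section
/- Let E be a measurable subset of ℂ such that for every b with |b| sufficiently large, m₂(E ∩ D(b, |b|^{1-ρ/2+ε/2})) ≥ C |b|^χ for constants C > 0, χ ∈ ℝ, 0 < ρ < 2, 0 < ε < ρ. Then there exists a constant C' > 0 such that for all sufficiently large R, m₂(E ∩ {z : R ≤ |z| < 2R}) ≥ C' R^{χ + ρ - ε}. -/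
open MeasureTheory Metric

set_option maxHeartbeats 2000000 in
/-- if every disk `D(b, |b|^{1-ρ/2+ε/2})` with `|b|` large captures
planar measure at least `C |b|^χ` of `E`, then
`m₂(E ∩ {R ≤ |z| < 2R}) ≥ C' R^{χ+ρ-ε}` for all large `R`. -/
theorem disk_to_annulus_measure_bound
    (E : Set ℂ) (hE : MeasurableSet E)
    (C χ ρ ε : ℝ) (hC : 0 < C) (hρ0 : 0 < ρ) (hρ2 : ρ < 2) (hε0 : 0 < ε) (hερ : ε < ρ)
    (R₀ : ℝ)
    (hdisk : ∀ b : ℂ, R₀ ≤ ‖b‖ →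
      C * ‖b‖ ^ χ ≤
        (volume (E ∩ ball b (‖b‖ ^ (1 - ρ / 2 + ε / 2)))).toReal) :
    ∃ C' R₁ : ℝ, 0 < C' ∧ ∀ R : ℝ, R₁ ≤ R →
      C' * R ^ (χ + ρ - ε) ≤
        (volume (E ∩ {z : ℂ | R ≤ ‖z‖ ∧ ‖z‖ < 2 * R})).toReal := by
  set δ : ℝ := (ρ - ε) / 2 with hδdef
  have hδ0 : 0 < δ := by simp only [hδdef]; linarith
  have hδ1 : δ < 1 := by simp only [hδdef]; linarith
  set m : ℝ := min 1 (2 ^ χ) with hmdef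
  have hm0 : 0 < m := lt_min one_pos (Real.rpow_pos_of_pos two_pos χ)
  refine ⟨C * m / 9216, max (max R₀ 1) ((96:ℝ) ^ (1/δ)), by positivity, ?_⟩
  intro R hR
  have hR1 : (1:ℝ) ≤ R := le_trans (le_trans (le_max_right _ _) (le_max_left _ _)) hR
  have hR0 : (0:ℝ) < R := lt_of_lt_of_le one_pos hR1
  have hRR₀ : R₀ ≤ R := le_trans (le_trans (le_max_left _ _) (le_max_left _ _)) hR
  -- R^δ ≥ 96
  have hRδ : (96:ℝ) ≤ R ^ δ := by
    have h1 : ((96:ℝ) ^ (1/δ)) ^ δ ≤ R ^ δ :=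
      Real.rpow_le_rpow (Real.rpow_nonneg (by norm_num) _)
        (le_trans (le_max_right _ _) hR) hδ0.le
    calc (96:ℝ) = ((96:ℝ) ^ (1/δ)) ^ δ := by
          rw [← Real.rpow_mul (by norm_num : (0:ℝ) ≤ 96), one_div,
            inv_mul_cancel₀ hδ0.ne', Real.rpow_one]
      _ ≤ R ^ δ := h1
  have hsplit : R ^ δ * R ^ (1 - δ) = R := by
    rw [← Real.rpow_add hR0]; norm_num
  have hP0 : (0:ℝ) < R ^ (1 - δ) := Real.rpow_pos_of_pos hR0 _
  have h96 : 96 * R ^ (1 - δ) ≤ R := by nlinarith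
  set s : ℝ := 6 * R ^ (1 - δ) with hsdef
  have hs0 : (0:ℝ) < s := by positivity
  have h16s : 16 * s ≤ R := by simp only [hsdef]; linarith
  set n : ℕ := ⌊R / (8 * s)⌋₊ with hndef
  have hn_ub : (n : ℝ) * s ≤ R / 8 := by
    have := Nat.floor_le (by positivity : (0:ℝ) ≤ R / (8 * s))
    calc (n:ℝ) * s ≤ (R / (8*s)) * s := mul_le_mul_of_nonneg_right this hs0.le
      _ = R / 8 := by field_simp
  have hn_lb : R ^ δ / 96 ≤ (n : ℝ) := by
    have h1 : R / (8*s) - 1 < (n:ℝ) := Nat.sub_one_lt_floor _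
    have h2 : R ^ δ / 96 = R / (16 * s) := by
      rw [eq_div_iff (by positivity)]
      simp only [hsdef]
      calc R ^ δ / 96 * (16 * (6 * R ^ (1-δ))) = R ^ δ * R ^ (1-δ) := by ring
        _ = R := hsplit
    have h3 : R / (16*s) ≤ R / (8*s) - 1 := by
      rw [div_sub' (by positivity : (8:ℝ)*s ≠ 0), div_le_div_iff₀ (by positivity) (by positivity)]
      nlinarith
    linarith
  have hs_lb : 4 * R ^ (1 - δ) ≤ s := by simp only [hsdef]; nlinarith
  have hs_ub : 2 * R ^ (1 - δ) ≤ R / 48 := by linarith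
  clear_value n
  clear_value s
  clear hndef hsdef
  -- centers of the disks
  set b : ℕ × ℕ → ℂ := fun p => ⟨5*R/4 + (p.1:ℝ) * s, (p.2:ℝ) * s⟩ with hbdef
  have hb_re : ∀ p : ℕ × ℕ, (b p).re = 5*R/4 + (p.1:ℝ) * s := fun _ => rfl
  have hb_im : ∀ p : ℕ × ℕ, (b p).im = (p.2:ℝ) * s := fun _ => rfl
  clear_value b
  clear hbdef
  set F : Finset (ℕ × ℕ) := Finset.range n ×ˢ Finset.range n with hFdef
  have hmemF : ∀ p ∈ F, p.1 < n ∧ p.2 < n := by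
    intro p hp
    simp only [hFdef, Finset.mem_product, Finset.mem_range] at hp
    exact hp
  have hcard : (F.card : ℝ) = (n:ℝ) * (n:ℝ) := by
    simp [hFdef, Finset.card_product]
  clear_value F
  clear hFdef
  -- bounds on the centers
  have hb_lo : ∀ p : ℕ × ℕ, 5*R/4 ≤ ‖b p‖ := by
    intro p
    have h1 : (b p).re ≤ ‖b p‖ := Complex.re_le_norm _
    have h2 := hb_re p
    have h3 : (0:ℝ) ≤ (p.1:ℝ) * s := mul_nonneg (Nat.cast_nonneg _) hs0.le
    linarith
  have hb_hi : ∀ p ∈ F, ‖b p‖ ≤ 3*R/2 := by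
    intro p hp
    obtain ⟨h1, h2⟩ := hmemF p hp
    have hj : (p.1:ℝ) * s ≤ R/8 := by
      have : (p.1:ℝ) ≤ (n:ℝ) := by exact_mod_cast h1.le
      nlinarith
    have hk : (p.2:ℝ) * s ≤ R/8 := by
      have : (p.2:ℝ) ≤ (n:ℝ) := by exact_mod_cast h2.le
      nlinarith
    have h3 := Complex.norm_le_abs_re_add_abs_im (b p)
    have hps : (0:ℝ) ≤ (p.1:ℝ) * s := mul_nonneg (Nat.cast_nonneg _) hs0.le
    have hqs : (0:ℝ) ≤ (p.2:ℝ) * s := mul_nonneg (Nat.cast_nonneg _) hs0.le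
    have h6 : |(b p).re| = 5*R/4 + (p.1:ℝ) * s := by
      rw [hb_re p, abs_of_nonneg (by linarith)]
    have h7 : |(b p).im| = (p.2:ℝ) * s := by
      rw [hb_im p, abs_of_nonneg hqs]
    rw [h6, h7] at h3
    linarith
  -- bounds on the radii
  set r : ℕ × ℕ → ℝ := fun p => ‖b p‖ ^ (1 - δ) with hrdef
  have hr_ub : ∀ p ∈ F, r p ≤ 2 * R ^ (1 - δ) := by
    intro p hp
    have h1 : ‖b p‖ ≤ 2 * R := le_trans (hb_hi p hp) (by linarith)
    have h2 : r p ≤ (2*R) ^ (1-δ) :=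
      Real.rpow_le_rpow (norm_nonneg _) h1 (by linarith)
    have h3 : ((2:ℝ)*R) ^ (1-δ) = 2 ^ (1-δ) * R ^ (1-δ) :=
      Real.mul_rpow (by norm_num) hR0.le
    have h4 : (2:ℝ) ^ (1-δ) ≤ 2 := by
      calc (2:ℝ) ^ (1-δ) ≤ 2 ^ (1:ℝ) :=
        Real.rpow_le_rpow_of_exponent_le one_le_two (by linarith)
        _ = 2 := Real.rpow_one 2
    calc r p ≤ 2 ^ (1-δ) * R ^ (1-δ) := h3 ▸ h2
      _ ≤ 2 * R ^ (1-δ) := mul_le_mul_of_nonneg_right h4 hP0.le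
  have hr_R : ∀ p ∈ F, r p ≤ R / 48 := by
    intro p hp
    have := hr_ub p hp
    linarith
  have hr_pos : ∀ p : ℕ × ℕ, 0 < r p :=
    fun p => Real.rpow_pos_of_pos (lt_of_lt_of_le (by linarith) (hb_lo p)) _
  -- disks are contained in the annulus
  have hsub : ∀ p ∈ F, ball (b p) (r p) ⊆
      {z : ℂ | R ≤ ‖z‖ ∧ ‖z‖ < 2 * R} := by
    intro p hp w hw
    rw [mem_ball] at hw
    have hd : ‖w - b p‖ < R / 48 := by
      rw [← Complex.dist_eq]; exact lt_of_lt_of_le hw (hr_R p hp)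
    have h1 : ‖b p‖ - ‖w‖ ≤ ‖b p - w‖ := by
      have := norm_sub_norm_le (b p) w
      simpa using this
    have h2 : ‖w‖ - ‖b p‖ ≤ ‖w - b p‖ := by
      have := norm_sub_norm_le w (b p)
      simpa using this
    have h3 : ‖b p - w‖ = ‖w - b p‖ :=
      norm_sub_rev (b p) w
    constructor
    · have := hb_lo p
      rw [h3] at h1
      linarith
    · have := hb_hi p hp
      linarith
  -- the disks are pairwise disjoint
  have hdisj : (F : Set (ℕ × ℕ)).PairwiseDisjoint (fun p => E ∩ ball (b p) (r p)) := by
    intro p hp q hq hpq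
    have hdist : s ≤ dist (b p) (b q) := by
      rw [Complex.dist_eq]
      have hre : (b p - b q).re = ((p.1:ℝ) - (q.1:ℝ)) * s := by
        rw [Complex.sub_re, hb_re p, hb_re q]; ring
      have him : (b p - b q).im = ((p.2:ℝ) - (q.2:ℝ)) * s := by
        rw [Complex.sub_im, hb_im p, hb_im q]; ring
      have key : p.1 ≠ q.1 ∨ p.2 ≠ q.2 := by
        by_contra hc
        push_neg at hc
        exact hpq (Prod.ext hc.1 hc.2)
      rcases key with h1 | h1
      · have hge : (1:ℝ) ≤ |(p.1:ℝ) - (q.1:ℝ)| := by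
          have : ((p.1:ℤ) - (q.1:ℤ)) ≠ 0 := sub_ne_zero.mpr (by exact_mod_cast h1)
          have := Int.one_le_abs this
          calc (1:ℝ) ≤ |((p.1:ℤ) - (q.1:ℤ) : ℤ)| := by exact_mod_cast this
            _ = |(p.1:ℝ) - (q.1:ℝ)| := by push_cast; rfl
        calc s = 1 * s := (one_mul s).symm
          _ ≤ |(p.1:ℝ) - (q.1:ℝ)| * s := by nlinarith
          _ = |((p.1:ℝ) - (q.1:ℝ)) * s| := by rw [abs_mul, abs_of_pos hs0]
          _ = |(b p - b q).re| := by rw [hre]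
          _ ≤ ‖b p - b q‖ := Complex.abs_re_le_norm _
      · have hge : (1:ℝ) ≤ |(p.2:ℝ) - (q.2:ℝ)| := by
          have : ((p.2:ℤ) - (q.2:ℤ)) ≠ 0 := sub_ne_zero.mpr (by exact_mod_cast h1)
          have := Int.one_le_abs this
          calc (1:ℝ) ≤ |((p.2:ℤ) - (q.2:ℤ) : ℤ)| := by exact_mod_cast this
            _ = |(p.2:ℝ) - (q.2:ℝ)| := by push_cast; rfl
        calc s = 1 * s := (one_mul s).symm
          _ ≤ |(p.2:ℝ) - (q.2:ℝ)| * s := by nlinarith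
          _ = |((p.2:ℝ) - (q.2:ℝ)) * s| := by rw [abs_mul, abs_of_pos hs0]
          _ = |(b p - b q).im| := by rw [him]
          _ ≤ ‖b p - b q‖ := Complex.abs_im_le_norm _
    have hrr : r p + r q ≤ dist (b p) (b q) := by
      have h1 := hr_ub p hp
      have h2 := hr_ub q hq
      have : r p + r q ≤ 4 * R ^ (1 - δ) := by linarith
      calc r p + r q ≤ 4 * R ^ (1-δ) := this
        _ ≤ s := hs_lb
        _ ≤ dist (b p) (b q) := hdist
    exact (ball_disjoint_ball hrr).mono Set.inter_subset_right Set.inter_subset_right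
  -- each disk captures measure at least C * m * R^χ
  have hperdisk : ∀ p ∈ F, C * (m * R ^ χ) ≤ (volume (E ∩ ball (b p) (r p))).toReal := by
    intro p hp
    have hbR : R ≤ ‖b p‖ := le_trans (by linarith) (hb_lo p)
    have hb2R : ‖b p‖ ≤ 2 * R := le_trans (hb_hi p hp) (by linarith)
    have hd := hdisk (b p) (le_trans hRR₀ hbR)
    have hexp : 1 - ρ/2 + ε/2 = 1 - δ := by simp only [hδdef]; ring
    rw [hexp] at hd
    have hmb : m * R ^ χ ≤ ‖b p‖ ^ χ := by
      rcases le_or_gt 0 χ with hχ | hχ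
      · have h1 : R ^ χ ≤ ‖b p‖ ^ χ := Real.rpow_le_rpow hR0.le hbR hχ
        have h2 : m ≤ 1 := min_le_left _ _
        have h3 : (0:ℝ) < R ^ χ := Real.rpow_pos_of_pos hR0 _
        nlinarith
      · have h1 : (2*R) ^ χ ≤ ‖b p‖ ^ χ :=
          Real.rpow_le_rpow_of_nonpos (lt_of_lt_of_le hR0 hbR)
            hb2R hχ.le
        have h2 : ((2:ℝ)*R) ^ χ = 2 ^ χ * R ^ χ := Real.mul_rpow (by norm_num) hR0.le
        have h3 : m ≤ 2 ^ χ := min_le_right _ _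
        have h4 : (0:ℝ) < R ^ χ := Real.rpow_pos_of_pos hR0 _
        nlinarith
    calc C * (m * R ^ χ) ≤ C * ‖b p‖ ^ χ := by nlinarith
      _ ≤ _ := hd
  -- assemble
  set A : Set ℂ := {z : ℂ | R ≤ ‖z‖ ∧ ‖z‖ < 2 * R} with hAdef
  have hAfin : volume (E ∩ A) ≠ ⊤ := by
    have hsub2 : E ∩ A ⊆ closedBall 0 (2*R) := by
      intro z hz
      rw [mem_closedBall_zero_iff]
      exact le_of_lt hz.2.2
    exact ne_top_of_le_ne_top measure_closedBall_lt_top.ne (measure_mono hsub2)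
  have hdiskfin : ∀ p ∈ F, volume (E ∩ ball (b p) (r p)) ≠ ⊤ := by
    intro p _
    exact ne_top_of_le_ne_top measure_ball_lt_top.ne (measure_mono Set.inter_subset_right)
  have hmeasble : ∀ p ∈ F, MeasurableSet (E ∩ ball (b p) (r p)) :=
    fun p _ => hE.inter measurableSet_ball
  have hunion : (∑ p ∈ F, volume (E ∩ ball (b p) (r p))) ≤ volume (E ∩ A) := by
    rw [← measure_biUnion_finset hdisj hmeasble]
    apply measure_mono
    intro z hz
    simp only [Set.mem_iUnion] at hz
    obtain ⟨p, hp, hzE, hzb⟩ := hz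
    exact ⟨hzE, hsub p hp hzb⟩
  have hsum : ∑ p ∈ F, C * (m * R ^ χ) ≤ (volume (E ∩ A)).toReal := by
    calc ∑ p ∈ F, C * (m * R ^ χ)
        ≤ ∑ p ∈ F, (volume (E ∩ ball (b p) (r p))).toReal := Finset.sum_le_sum hperdisk
      _ = (∑ p ∈ F, volume (E ∩ ball (b p) (r p))).toReal := (ENNReal.toReal_sum hdiskfin).symm
      _ ≤ (volume (E ∩ A)).toReal := ENNReal.toReal_mono hAfin hunion
  have hsum2 : ∑ p ∈ F, C * (m * R ^ χ) = (n:ℝ) * (n:ℝ) * (C * (m * R ^ χ)) := by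
    rw [Finset.sum_const, nsmul_eq_mul, hcard]
  -- final arithmetic
  have hRχ : (0:ℝ) < R ^ χ := Real.rpow_pos_of_pos hR0 _
  have hfinal : C * m / 9216 * R ^ (χ + ρ - ε) ≤ (n:ℝ) * (n:ℝ) * (C * (m * R ^ χ)) := by
    have hsplit2 : R ^ (χ + ρ - ε) = R ^ χ * (R ^ δ * R ^ δ) := by
      rw [← Real.rpow_add hR0, ← Real.rpow_add hR0]
      congr 1
      simp only [hδdef]; ring
    rw [hsplit2]
    have h1 : R ^ δ / 96 ≤ (n:ℝ) := hn_lb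
    have h2 : (0:ℝ) < R ^ δ := Real.rpow_pos_of_pos hR0 _
    have key : (R ^ δ / 96) * (R ^ δ / 96) ≤ (n:ℝ) * (n:ℝ) :=
      mul_le_mul h1 h1 (by positivity) (Nat.cast_nonneg n)
    have key2 := mul_le_mul_of_nonneg_right key
      (mul_nonneg hC.le (mul_nonneg hm0.le hRχ.le))
    calc C * m / 9216 * (R ^ χ * (R ^ δ * R ^ δ))
        = (R ^ δ / 96) * (R ^ δ / 96) * (C * (m * R ^ χ)) := by ring
      _ ≤ (n:ℝ) * (n:ℝ) * (C * (m * R ^ χ)) := key2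
  calc C * m / 9216 * R ^ (χ + ρ - ε)
      ≤ (n:ℝ) * (n:ℝ) * (C * (m * R ^ χ)) := hfinal
    _ = ∑ p ∈ F, C * (m * R ^ χ) := hsum2.symm
    _ ≤ (volume (E ∩ A)).toReal := hsum
end
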